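/- arXiv:2405.20957 — 3 statements merged into one kernel-verified Lean document; each statement's English description precedes it below -/
import Mathlib

section
/- Let s be a real number, v a vector in ℝⁿ, K″ an n×n real symmetric matrix such that the (n+1)×(n+1) block matrix [[s, vᵀ], [v, K″]] is positive semidefinite, K′ an n×n real symmetric positive semidefinite matrix, σ² > 0, and ρ a real number with ρ² ≤ 1. Then the matrix Σ = K″ + (1−ρ²)·K′ + σ²·I is invertible and s − ρ²·vᵀΣ⁻¹v ≥ (1−ρ²)·s. -/
open Matrix

lemma smul_posSemidef {n : ℕ} {c : ℝ} (hc : 0 ≤ c) {M : Matrix (Fin n) (Fin n) ℝ}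
    (hM : M.PosSemidef) : (c • M).PosSemidef := by
  refine posSemidef_iff_dotProduct_mulVec.mpr ⟨?_, fun x => ?_⟩
  · unfold Matrix.IsHermitian
    rw [conjTranspose_smul, hM.1]
    simp
  · rw [smul_mulVec, dotProduct_smul]
    exact smul_nonneg hc (hM.dotProduct_mulVec_nonneg x)

lemma smul_one_posDef {n : ℕ} {c : ℝ} (hc : 0 < c) :
    (c • (1 : Matrix (Fin n) (Fin n) ℝ)).PosDef := by
  refine posDef_iff_dotProduct_mulVec.mpr ⟨?_, fun x hx => ?_⟩
  · unfold Matrix.IsHermitian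
    rw [conjTranspose_smul, conjTranspose_one]
    simp
  · rw [smul_mulVec, dotProduct_smul, one_mulVec]
    have : (0:ℝ) < star x ⬝ᵥ x := by
      simpa using dotProduct_star_self_pos_iff.mpr hx
    simpa using mul_pos hc (by simpa using this)

/-- Matrix form of Proposition 3.1: the observational data can shrink the
experimental posterior variance by at most a factor `1 − ρ²`.  If the block matrix
`[[s, vᵀ], [v, K″]]` is positive semidefinite (with `K″` symmetric), `K′` is
symmetric positive semidefinite, `σ² > 0` and `ρ² ≤ 1`, then
`Σ = K″ + (1−ρ²)·K′ + σ²·I` is invertible and `s − ρ²·vᵀΣ⁻¹v ≥ (1−ρ²)·s`. -/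
theorem variance_shrinkage_bound {n : ℕ} (s : ℝ) (v : Fin n → ℝ)
    (K'' K' : Matrix (Fin n) (Fin n) ℝ) (hK'' : K''ᵀ = K'')
    (hblock : (Matrix.fromBlocks !![s] (Matrix.of fun _ j => v j)
        (Matrix.of fun i _ => v i) K'').PosSemidef)
    (hK' : K'.PosSemidef)
    (σ2 : ℝ) (hσ2 : 0 < σ2) (ρ : ℝ) (hρ : ρ ^ 2 ≤ 1) :
    IsUnit (K'' + (1 - ρ ^ 2) • K' + σ2 • (1 : Matrix (Fin n) (Fin n) ℝ)).det ∧
      (1 - ρ ^ 2) * s ≤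
        s - ρ ^ 2 *
          (v ⬝ᵥ ((K'' + (1 - ρ ^ 2) • K' + σ2 • (1 : Matrix (Fin n) (Fin n) ℝ))⁻¹ *ᵥ v)) := by
  set M := Matrix.fromBlocks !![s] (Matrix.of fun _ j => v j)
      (Matrix.of fun i _ => v i) K'' with hM
  set Sg := K'' + (1 - ρ ^ 2) • K' + σ2 • (1 : Matrix (Fin n) (Fin n) ℝ) with hSg
  -- K'' is PSD
  have hK''psd : K''.PosSemidef := by
    have := hblock.submatrix Sum.inr
    have heq : M.submatrix Sum.inr Sum.inr = K'' := by
      ext i j; simp [hM]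
    rwa [heq] at this
  -- Σ is PD
  have hSgpd : Sg.PosDef := by
    have h1 : ((1 - ρ ^ 2) • K').PosSemidef := smul_posSemidef (by linarith) hK'
    exact Matrix.PosDef.posSemidef_add (hK''psd.add h1) (smul_one_posDef hσ2)
  have hdet : IsUnit Sg.det := hSgpd.det_pos.ne'.isUnit
  refine ⟨hdet, ?_⟩
  -- the quadratic form inequality from the block PSD hypothesis
  have quad : ∀ (t : ℝ) (w : Fin n → ℝ),
      0 ≤ s * (t * t) + (2 * (v ⬝ᵥ w)) * t + w ⬝ᵥ (K'' *ᵥ w) := by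
    intro t w
    have h := hblock.dotProduct_mulVec_nonneg (Sum.elim (fun _ => t) w)
    simp only [star_trivial, dotProduct, Fintype.sum_sum_type, mulVec,
      Sum.elim_inl, Sum.elim_inr, hM, fromBlocks_apply₁₁, fromBlocks_apply₁₂,
      fromBlocks_apply₂₁, fromBlocks_apply₂₂, of_apply, Fin.sum_univ_one,
      Matrix.cons_val', Matrix.cons_val_zero, Matrix.empty_val',
      Matrix.cons_val_fin_one, Matrix.cons_val_one, Matrix.head_cons] at h
    have e2 : v ⬝ᵥ w = ∑ x, v x * w x := rfl
    have e1 : ∑ x, w x * (v x * t + ∑ y, K'' x y * w y) = (v ⬝ᵥ w) * t + w ⬝ᵥ (K'' *ᵥ w) := by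
      simp only [mul_add, Finset.sum_add_distrib, dotProduct, mulVec]
      congr 1
      rw [Finset.sum_mul]
      exact Finset.sum_congr rfl fun i _ => by ring
    rw [e1, ← e2] at h
    have e3 : s * (t * t) + 2 * (v ⬝ᵥ w) * t + w ⬝ᵥ (K'' *ᵥ w)
        = t * (s * t + v ⬝ᵥ w) + ((v ⬝ᵥ w) * t + w ⬝ᵥ (K'' *ᵥ w)) := by ring
    rw [e3]
    exact h
  have hs0 : 0 ≤ s := by
    have := quad 1 0
    simpa using this
  set w := Sg⁻¹ *ᵥ v with hw
  have hSgw : Sg *ᵥ w = v := by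
    rw [hw, mulVec_mulVec, Matrix.mul_nonsing_inv _ hdet, one_mulVec]
  have ha : v ⬝ᵥ w = w ⬝ᵥ (Sg *ᵥ w) := by rw [hSgw, dotProduct_comm]
  have hanneg : 0 ≤ v ⬝ᵥ w := by
    have := hSgpd.posSemidef.dotProduct_mulVec_nonneg w
    simp only [star_trivial] at this
    rw [ha]; exact this
  -- (v⬝w)^2 ≤ s * (w ⬝ K'' w)
  have hdisc : (2 * (v ⬝ᵥ w)) ^ 2 - 4 * s * (w ⬝ᵥ (K'' *ᵥ w)) ≤ 0 := by
    have := discrim_le_zero (a := s) (b := 2 * (v ⬝ᵥ w)) (c := w ⬝ᵥ (K'' *ᵥ w))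
      (fun t => quad t w)
    simpa [discrim] using this
  -- w ⬝ K'' w ≤ w ⬝ Σ w = v ⬝ w
  have hrest : w ⬝ᵥ (K'' *ᵥ w) ≤ v ⬝ᵥ w := by
    rw [ha, hSg]
    have h1 : (0:ℝ) ≤ w ⬝ᵥ (((1 - ρ ^ 2) • K') *ᵥ w) := by
      have := (smul_posSemidef (by linarith : (0:ℝ) ≤ 1 - ρ^2) hK').dotProduct_mulVec_nonneg w
      simpa using this
    have h2 : (0:ℝ) ≤ w ⬝ᵥ ((σ2 • (1 : Matrix (Fin n) (Fin n) ℝ)) *ᵥ w) := by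
      have := (smul_one_posDef (n := n) hσ2).posSemidef.dotProduct_mulVec_nonneg w
      simpa using this
    rw [add_mulVec, add_mulVec, dotProduct_add, dotProduct_add]
    linarith
  have hkey : v ⬝ᵥ w ≤ s := by
    have h2 : (v ⬝ᵥ w) ^ 2 ≤ s * (v ⬝ᵥ w) := by nlinarith
    rcases eq_or_lt_of_le hanneg with h | h
    · rw [← h]; exact hs0
    · nlinarith
  have hρ2 : 0 ≤ ρ ^ 2 := sq_nonneg ρ
  nlinarith
end

section
/- Let (Ω, P) be a probability space carrying integrable real random variables Y¹ and Y⁰ (the potential outcomes), a treatment indicator A taking values in {0,1}, a trial-participation indicator S (S = e denotes the event of participation in the RCT), and covariates X_τ and X_S taking values in finite types, with the observed outcome Y = Y¹ on {A = 1} and Y = Y⁰ on {A = 0} (consistency). Fix a value t of X_τ with P(X_τ = t) > 0, and assume: (positivity) for every value s of X_S with P(X_τ = t, X_S = s) > 0, the events {A = a, X_τ = t, X_S = s, S = e} have positive probability for a = 0 and a = 1; (trial exchangeability) E[Y¹ − Y⁰ | X_τ = t, X_S = s] = E[Y¹ − Y⁰ | X_τ = t, X_S = s, S = e] for every such s; (treatment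 exchangeability in the trial) E[Yᵃ | X_τ = t, X_S = s, S = e] = E[Yᵃ | A = a, X_τ = t, X_S = s, S = e] for a = 0,1 and every such s; (randomization) P(X_S = s | A = a, X_τ = t, S = e) = P(X_S = s | X_τ = t, S = e) for a = 0,1 and every s; and (selection invariance) P(X_S = s | X_τ = t) = P(X_S = s | X_τ = t, S = e) for every s. Then E[Y¹ − Y⁰ | X_τ = t] = E[Y | A = 1, X_τ = t, S = e] − E[Y | A = 0, X_τ = t, S = e]. -/
open MeasureTheory ProbabilityTheory

private lemma cond_integrable' {Ω : Type*} [MeasurableSpace Ω] {μ : Measure Ω}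
    {f : Ω → ℝ} (hf : Integrable f μ) {C : Set Ω} (hC : μ C ≠ 0) :
    Integrable f (μ[|C]) := by
  rw [ProbabilityTheory.cond]
  exact (hf.restrict).smul_measure (ENNReal.inv_ne_top.mpr hC)

private lemma cond_total' {Ω Sc : Type*} [MeasurableSpace Ω] (μ : Measure Ω) [IsFiniteMeasure μ]
    [Fintype Sc] [MeasurableSpace Sc] [MeasurableSingletonClass Sc]
    {XS : Ω → Sc} (hXS : Measurable XS) {B : Set Ω} (hB : MeasurableSet B)
    {f : Ω → ℝ} (hf : Integrable f μ) :
    ∫ ω, f ω ∂(μ[|B]) =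
      ∑ s, ((μ[|B]) {ω | XS ω = s}).toReal * ∫ ω, f ω ∂(μ[|B ∩ {ω | XS ω = s}]) := by
  have hBt : μ B ≠ ⊤ := measure_ne_top μ B
  have hsm : ∀ s : Sc, MeasurableSet {ω | XS ω = s} := fun s => hXS (measurableSet_singleton s)
  have hunion : (⋃ s : Sc, B ∩ {ω | XS ω = s}) = B := by
    ext ω; simp
  have hdisj : Pairwise (Function.onFun Disjoint fun s : Sc => B ∩ {ω | XS ω = s}) := by
    intro i j hij
    simp only [Function.onFun, Set.disjoint_left]
    rintro ω ⟨-, hi⟩ ⟨-, hj⟩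
    exact hij (hi.symm.trans hj)
  have hsum : ∫ ω in B, f ω ∂μ = ∑ s, ∫ ω in B ∩ {ω | XS ω = s}, f ω ∂μ := by
    conv_lhs => rw [← hunion]
    exact integral_iUnion_fintype (fun s => hB.inter (hsm s)) hdisj
      (fun s => hf.integrableOn)
  rw [ProbabilityTheory.cond, integral_smul_measure, hsum, Finset.smul_sum]
  refine Finset.sum_congr rfl fun s _ => ?_
  rw [show ((μ B)⁻¹ • μ.restrict B) {ω | XS ω = s} = (μ B)⁻¹ * μ (B ∩ {ω | XS ω = s}) from by
    rw [Measure.smul_apply, Measure.restrict_apply (hsm s), Set.inter_comm]; rfl]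
  by_cases hC : μ (B ∩ {ω | XS ω = s}) = 0
  · simp [hC, Measure.restrict_eq_zero.mpr hC]
  · have hCt : μ (B ∩ {ω | XS ω = s}) ≠ ⊤ := measure_ne_top _ _
    rw [ProbabilityTheory.cond, integral_smul_measure]
    rw [ENNReal.toReal_mul, ENNReal.toReal_inv, ENNReal.toReal_inv, smul_eq_mul, smul_eq_mul]
    have hc0 : (μ (B ∩ {ω | XS ω = s})).toReal ≠ 0 := ENNReal.toReal_ne_zero.mpr ⟨hC, hCt⟩
    rw [mul_assoc, ← mul_assoc ((μ (B ∩ {ω | XS ω = s})).toReal),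
      mul_inv_cancel₀ hc0, one_mul]



/-- Identification of the CATE in the target population from the RCT data:
under consistency, positivity, trial exchangeability, treatment exchangeability
in the trial, randomization of treatment, and selection invariance,
`E[Y¹ − Y⁰ | X_τ = t] = E[Y | A = 1, X_τ = t, S = e] − E[Y | A = 0, X_τ = t, S = e]`. -/
theorem cate_identification
    {Ω : Type*} [MeasurableSpace Ω] (μ : Measure Ω) [IsProbabilityMeasure μ]
    {T Sc : Type*} [Fintype T] [MeasurableSpace T] [MeasurableSingletonClass T]
    [Fintype Sc] [MeasurableSpace Sc] [MeasurableSingletonClass Sc]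
    (Y1 Y0 Y : Ω → ℝ) (A : Ω → Bool) (S : Ω → Bool) (XT : Ω → T) (XS : Ω → Sc)
    (hY1 : Integrable Y1 μ) (hY0 : Integrable Y0 μ)
    (hA : Measurable A) (hS : Measurable S) (hXT : Measurable XT) (hXS : Measurable XS)
    -- consistency: the observed outcome agrees with the potential outcome of the
    -- received treatment
    (hcons : ∀ ω, (A ω = true → Y ω = Y1 ω) ∧ (A ω = false → Y ω = Y0 ω))
    (t : T) (ht : 0 < μ {ω | XT ω = t})
    -- positivity
    (hpos : ∀ s : Sc, 0 < μ {ω | XT ω = t ∧ XS ω = s} →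
      0 < μ {ω | A ω = false ∧ XT ω = t ∧ XS ω = s ∧ S ω = true} ∧
      0 < μ {ω | A ω = true ∧ XT ω = t ∧ XS ω = s ∧ S ω = true})
    -- trial exchangeability
    (hexchS : ∀ s : Sc, 0 < μ {ω | XT ω = t ∧ XS ω = s} →
      ∫ ω, (Y1 ω - Y0 ω) ∂(μ[|{ω | XT ω = t ∧ XS ω = s}]) =
      ∫ ω, (Y1 ω - Y0 ω) ∂(μ[|{ω | XT ω = t ∧ XS ω = s ∧ S ω = true}]))
    -- treatment exchangeability in the trial
    (hexchA1 : ∀ s : Sc, 0 < μ {ω | XT ω = t ∧ XS ω = s} →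
      ∫ ω, Y1 ω ∂(μ[|{ω | XT ω = t ∧ XS ω = s ∧ S ω = true}]) =
      ∫ ω, Y1 ω ∂(μ[|{ω | A ω = true ∧ XT ω = t ∧ XS ω = s ∧ S ω = true}]))
    (hexchA0 : ∀ s : Sc, 0 < μ {ω | XT ω = t ∧ XS ω = s} →
      ∫ ω, Y0 ω ∂(μ[|{ω | XT ω = t ∧ XS ω = s ∧ S ω = true}]) =
      ∫ ω, Y0 ω ∂(μ[|{ω | A ω = false ∧ XT ω = t ∧ XS ω = s ∧ S ω = true}]))
    -- randomization: X_S ⟂ A within the trial, given X_τ = t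
    (hrand : ∀ s : Sc, ∀ a : Bool,
      (μ[|{ω | A ω = a ∧ XT ω = t ∧ S ω = true}]) {ω | XS ω = s} =
      (μ[|{ω | XT ω = t ∧ S ω = true}]) {ω | XS ω = s})
    -- selection invariance
    (hselinv : ∀ s : Sc,
      (μ[|{ω | XT ω = t}]) {ω | XS ω = s} =
      (μ[|{ω | XT ω = t ∧ S ω = true}]) {ω | XS ω = s}) :
    ∫ ω, (Y1 ω - Y0 ω) ∂(μ[|{ω | XT ω = t}]) =
      (∫ ω, Y ω ∂(μ[|{ω | A ω = true ∧ XT ω = t ∧ S ω = true}])) -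
      (∫ ω, Y ω ∂(μ[|{ω | A ω = false ∧ XT ω = t ∧ S ω = true}])) := by
  have mT : MeasurableSet {ω | XT ω = t} := hXT (measurableSet_singleton t)
  have mS : MeasurableSet {ω | S ω = true} := hS (measurableSet_singleton true)
  have mA : ∀ a : Bool, MeasurableSet {ω | A ω = a} := fun a => hA (measurableSet_singleton a)
  have mATS : ∀ a : Bool, MeasurableSet {ω | A ω = a ∧ XT ω = t ∧ S ω = true} := by
    intro a
    have h : {ω | A ω = a ∧ XT ω = t ∧ S ω = true}
        = {ω | A ω = a} ∩ ({ω | XT ω = t} ∩ {ω | S ω = true}) := by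
      ext ω; simp only [Set.mem_inter_iff, Set.mem_setOf_eq]
    rw [h]; exact (mA a).inter (mT.inter mS)
  have eTS : ∀ s : Sc, {ω | XT ω = t} ∩ {ω | XS ω = s} = {ω | XT ω = t ∧ XS ω = s} := by
    intro s; ext ω; simp only [Set.mem_inter_iff, Set.mem_setOf_eq]
  have eATS : ∀ (a : Bool) (s : Sc),
      {ω | A ω = a ∧ XT ω = t ∧ S ω = true} ∩ {ω | XS ω = s}
        = {ω | A ω = a ∧ XT ω = t ∧ XS ω = s ∧ S ω = true} := by
    intro a s; ext ω; simp only [Set.mem_inter_iff, Set.mem_setOf_eq]; tauto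
  have hYcongr : ∀ (a : Bool) (g : Ω → ℝ) (C : Set Ω), MeasurableSet C →
      (∀ ω ∈ C, A ω = a) → (∀ ω, A ω = a → Y ω = g ω) →
      ∫ ω, Y ω ∂(μ[|C]) = ∫ ω, g ω ∂(μ[|C]) := by
    intro a g C hC hCa hg
    rw [ProbabilityTheory.cond, integral_smul_measure, integral_smul_measure,
      setIntegral_congr_fun hC (fun ω hω => hg ω (hCa ω hω))]
  have hL : ∫ ω, (Y1 ω - Y0 ω) ∂(μ[|{ω | XT ω = t}])
      = ∑ s, ((μ[|{ω | XT ω = t}]) {ω | XS ω = s}).toReal *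
          ∫ ω, (Y1 ω - Y0 ω) ∂(μ[|{ω | XT ω = t ∧ XS ω = s}]) := by
    rw [cond_total' μ hXS mT (f := fun ω => Y1 ω - Y0 ω) (hY1.sub hY0)]
    exact Finset.sum_congr rfl fun s _ => by rw [eTS s]
  have hR1 : ∫ ω, Y ω ∂(μ[|{ω | A ω = true ∧ XT ω = t ∧ S ω = true}])
      = ∑ s, ((μ[|{ω | A ω = true ∧ XT ω = t ∧ S ω = true}]) {ω | XS ω = s}).toReal *
          ∫ ω, Y1 ω ∂(μ[|{ω | A ω = true ∧ XT ω = t ∧ XS ω = s ∧ S ω = true}]) := by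
    rw [hYcongr true Y1 _ (mATS true) (fun ω hω => hω.1) (fun ω h => (hcons ω).1 h),
      cond_total' μ hXS (mATS true) hY1]
    exact Finset.sum_congr rfl fun s _ => by rw [eATS true s]
  have hR0 : ∫ ω, Y ω ∂(μ[|{ω | A ω = false ∧ XT ω = t ∧ S ω = true}])
      = ∑ s, ((μ[|{ω | A ω = false ∧ XT ω = t ∧ S ω = true}]) {ω | XS ω = s}).toReal *
          ∫ ω, Y0 ω ∂(μ[|{ω | A ω = false ∧ XT ω = t ∧ XS ω = s ∧ S ω = true}]) := by
    rw [hYcongr false Y0 _ (mATS false) (fun ω hω => hω.1) (fun ω h => (hcons ω).2 h),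
      cond_total' μ hXS (mATS false) hY0]
    exact Finset.sum_congr rfl fun s _ => by rw [eATS false s]
  have hw : ∀ (a : Bool) (s : Sc),
      ((μ[|{ω | A ω = a ∧ XT ω = t ∧ S ω = true}]) {ω | XS ω = s}).toReal
        = ((μ[|{ω | XT ω = t}]) {ω | XS ω = s}).toReal :=
    fun a s => congrArg ENNReal.toReal ((hrand s a).trans (hselinv s).symm)
  have key : ∀ s : Sc,
      ((μ[|{ω | XT ω = t}]) {ω | XS ω = s}).toReal *
        ∫ ω, (Y1 ω - Y0 ω) ∂(μ[|{ω | XT ω = t ∧ XS ω = s}])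
      = ((μ[|{ω | XT ω = t}]) {ω | XS ω = s}).toReal *
          (∫ ω, Y1 ω ∂(μ[|{ω | A ω = true ∧ XT ω = t ∧ XS ω = s ∧ S ω = true}]))
        - ((μ[|{ω | XT ω = t}]) {ω | XS ω = s}).toReal *
          (∫ ω, Y0 ω ∂(μ[|{ω | A ω = false ∧ XT ω = t ∧ XS ω = s ∧ S ω = true}])) := by
    intro s
    by_cases hws : (μ[|{ω | XT ω = t}]) {ω | XS ω = s} = 0
    · simp [hws]
    · have hts : μ {ω | XT ω = t ∧ XS ω = s} ≠ 0 := by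
        intro h0
        apply hws
        rw [cond_apply mT, eTS s, h0, mul_zero]
      have htspos : 0 < μ {ω | XT ω = t ∧ XS ω = s} := pos_iff_ne_zero.mpr hts
      have htss : μ {ω | XT ω = t ∧ XS ω = s ∧ S ω = true} ≠ 0 := by
        have hsub : {ω | A ω = true ∧ XT ω = t ∧ XS ω = s ∧ S ω = true}
            ⊆ {ω | XT ω = t ∧ XS ω = s ∧ S ω = true} := fun ω hω => hω.2
        exact (lt_of_lt_of_le (hpos s htspos).2 (measure_mono hsub)).ne'
      have hsplit : ∫ ω, (Y1 ω - Y0 ω) ∂(μ[|{ω | XT ω = t ∧ XS ω = s ∧ S ω = true}])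
          = (∫ ω, Y1 ω ∂(μ[|{ω | XT ω = t ∧ XS ω = s ∧ S ω = true}]))
            - ∫ ω, Y0 ω ∂(μ[|{ω | XT ω = t ∧ XS ω = s ∧ S ω = true}]) :=
        integral_sub (cond_integrable' hY1 htss) (cond_integrable' hY0 htss)
      rw [hexchS s htspos, hsplit, hexchA1 s htspos, hexchA0 s htspos, mul_sub]
  rw [hL, hR1, hR0]
  simp_rw [hw]
  rw [← Finset.sum_sub_distrib]
  exact Finset.sum_congr rfl fun s _ => key s
end

section
/- Let (Ω, P) be a probability space carrying integrable real random variables Y¹ and Y⁰ (the potential outcomes), a trial-participation indicator S (S = e denotes participation in the RCT), and covariates X_τ and X_S taking values in finite types. Fix a value t of X_τ with P(X_τ = t) > 0, and assume: (positivity) for every value s of X_S with P(X_τ = t, X_S = s) > 0 one has P(X_τ = t, X_S = s, S = e) > 0; (trial exchangeability) E[Y¹ − Y⁰ | X_τ = t, X_S = s] = E[Y¹ − Y⁰ | X_τ = t, X_S = s, S = e] for every such s; and (selection invariance) P(X_S = s | X_τ = t) = P(X_S = s | X_τ = t, S = e) for every s. Then E[Y¹ − Y⁰ | X_τ = t] =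 Σ_s P(X_S = s | X_τ = t, S = e) · E[Y¹ − Y⁰ | X_τ = t, X_S = s, S = e], where the sum ranges over values s with P(X_τ = t, X_S = s) > 0. -/
open MeasureTheory ProbabilityTheory

/-- Averaging the within-trial CATE over the conditional distribution of the
selection covariates `X_S` given `X_τ = t` in the RCT recovers the CATE in the
target population. -/
theorem cate_averaging
    {Ω : Type*} [MeasurableSpace Ω] (μ : Measure Ω) [IsProbabilityMeasure μ]
    {T Sc : Type*} [Fintype T] [MeasurableSpace T] [MeasurableSingletonClass T]
    [Fintype Sc] [MeasurableSpace Sc] [MeasurableSingletonClass Sc]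
    (Y1 Y0 : Ω → ℝ) (S : Ω → Bool) (XT : Ω → T) (XS : Ω → Sc)
    (hY1 : Integrable Y1 μ) (hY0 : Integrable Y0 μ)
    (hS : Measurable S) (hXT : Measurable XT) (hXS : Measurable XS)
    (t : T) (ht : 0 < μ {ω | XT ω = t})
    -- positivity
    (hpos : ∀ s : Sc, 0 < μ {ω | XT ω = t ∧ XS ω = s} →
      0 < μ {ω | XT ω = t ∧ XS ω = s ∧ S ω = true})
    -- trial exchangeability
    (hexch : ∀ s : Sc, 0 < μ {ω | XT ω = t ∧ XS ω = s} →
      ∫ ω, (Y1 ω - Y0 ω) ∂(μ[|{ω | XT ω = t ∧ XS ω = s}]) =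
      ∫ ω, (Y1 ω - Y0 ω) ∂(μ[|{ω | XT ω = t ∧ XS ω = s ∧ S ω = true}]))
    -- selection invariance
    (hselinv : ∀ s : Sc,
      (μ[|{ω | XT ω = t}]) {ω | XS ω = s} =
      (μ[|{ω | XT ω = t ∧ S ω = true}]) {ω | XS ω = s}) :
    ∫ ω, (Y1 ω - Y0 ω) ∂(μ[|{ω | XT ω = t}]) =
      ∑ s ∈ Finset.univ.filter (fun s : Sc => 0 < μ {ω | XT ω = t ∧ XS ω = s}),
        ((μ[|{ω | XT ω = t ∧ S ω = true}]) {ω | XS ω = s}).toReal *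
          ∫ ω, (Y1 ω - Y0 ω) ∂(μ[|{ω | XT ω = t ∧ XS ω = s ∧ S ω = true}]) := by
  set f : Ω → ℝ := fun ω => Y1 ω - Y0 ω with hf
  have hfint : Integrable f μ := hY1.sub hY0
  set A : Set Ω := {ω | XT ω = t} with hA
  have hAm : MeasurableSet A := hXT (measurableSet_singleton t)
  set B : Sc → Set Ω := fun s => {ω | XT ω = t ∧ XS ω = s} with hB
  have hBm : ∀ s, MeasurableSet (B s) :=
    fun s => (hXT (measurableSet_singleton t)).inter (hXS (measurableSet_singleton s))
  have hAeq : A = ⋃ s, B s := by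
    ext ω
    simp only [hA, hB, Set.mem_iUnion, Set.mem_setOf_eq]
    exact ⟨fun h => ⟨XS ω, h, rfl⟩, fun ⟨s, h, _⟩ => h⟩
  have hdisj : Pairwise (Function.onFun Disjoint B) := by
    intro s s' hss'
    simp only [Function.onFun, Set.disjoint_left]
    rintro ω ⟨_, h1⟩ ⟨_, h2⟩
    exact hss' (h1 ▸ h2 ▸ rfl)
  -- LHS expansion
  have hcondint : ∀ (C : Set Ω), ∫ ω, f ω ∂(μ[|C]) = (μ C)⁻¹.toReal * ∫ ω in C, f ω ∂μ := by
    intro C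
    rw [ProbabilityTheory.cond, integral_smul_measure]
    rfl
  have hsplit : ∫ ω in A, f ω ∂μ = ∑ s, ∫ ω in B s, f ω ∂μ := by
    rw [hAeq, integral_iUnion hBm hdisj hfint.integrableOn]
    exact tsum_fintype _
  have hzero : ∀ s : Sc, ¬ 0 < μ (B s) → ∫ ω in B s, f ω ∂μ = 0 := by
    intro s hs
    have : μ (B s) = 0 := by simpa using hs
    exact setIntegral_measure_zero _ this
  rw [hcondint, hsplit, Finset.mul_sum]
  rw [← Finset.sum_subset (Finset.filter_subset (fun s : Sc => 0 < μ (B s)) Finset.univ)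
      (fun s _ hs => by rw [hzero s (by simpa using hs)]; ring)]
  apply Finset.sum_congr rfl
  intro s hs
  have hs' : 0 < μ (B s) := (Finset.mem_filter.mp hs).2
  have hABs : A ∩ {ω | XS ω = s} = B s := by
    ext ω; simp only [hA, hB, Set.mem_inter_iff, Set.mem_setOf_eq]
  rw [← hexch s hs', hcondint, ← hselinv s, ProbabilityTheory.cond_apply hAm, hABs]
  have hBne : (μ (B s)).toReal ≠ 0 :=
    ENNReal.toReal_ne_zero.mpr ⟨hs'.ne', measure_ne_top μ _⟩
  rw [ENNReal.toReal_mul, ENNReal.toReal_inv, ENNReal.toReal_inv]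
  show (μ A).toReal⁻¹ * ∫ ω in B s, f ω ∂μ =
    (μ A).toReal⁻¹ * (μ (B s)).toReal * ((μ (B s)).toReal⁻¹ * ∫ ω in B s, f ω ∂μ)
  rw [mul_assoc, ← mul_assoc ((μ (B s)).toReal), mul_inv_cancel₀ hBne, one_mul]
end
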